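/- arXiv:2404.13718 — 3 statements merged into one kernel-verified Lean document; each statement's English description precedes it below -/
import Mathlib

section
/- Let c_1,…,c_n and d_1,…,d_n be real numbers. Suppose a sequence (M_m)_{m≥0} of real numbers satisfies M_0 = 1 and M_m = Σ_{i=1}^n c_i Σ_{j=0}^{m-1} C(m-1, j) d_i^{m-1-j} M_j for all m ≥ 1. If A ≥ 1 satisfies |d_i|^p / p! ≤ A for all i and all p ≥ 0, and k = max{A·Σ_i |c_i|, 1}, then |M_m| ≤ k^m · m! for all m ≥ 0. -/
theorem moment_growth_estimate (n : ℕ) (c d : Fin n → ℝ) (M : ℕ → ℝ)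
    (hM0 : M 0 = 1)
    (hrec : ∀ m : ℕ, 1 ≤ m →
      M m = ∑ i, c i * ∑ j ∈ Finset.range m,
        (Nat.choose (m - 1) j : ℝ) * d i ^ (m - 1 - j) * M j)
    (A : ℝ) (hA : 1 ≤ A)
    (hAd : ∀ i, ∀ p : ℕ, |d i| ^ p / Nat.factorial p ≤ A)
    (k : ℝ) (hk : k = max (A * ∑ i, |c i|) 1) :
    ∀ m : ℕ, |M m| ≤ k ^ m * Nat.factorial m := by
  have hk1 : (1:ℝ) ≤ k := hk ▸ le_max_right _ _
  have hkc : A * ∑ i, |c i| ≤ k := hk ▸ le_max_left _ _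
  have hk0 : (0:ℝ) ≤ k := le_trans zero_le_one hk1
  have hA0 : (0:ℝ) ≤ A := le_trans zero_le_one hA
  intro m
  induction m using Nat.strong_induction_on with
  | _ m ih =>
    match m with
    | 0 => simp [hM0]
    | Nat.succ l =>
      rw [hrec (l+1) (Nat.le_add_left 1 l)]
      simp only [Nat.add_sub_cancel]
      have hinner : ∀ i : Fin n,
          |∑ j ∈ Finset.range (l+1),
            (Nat.choose l j : ℝ) * d i ^ (l - j) * M j|
          ≤ (l+1) * (A * l.factorial * k ^ l) := by
        intro i
        calc |∑ j ∈ Finset.range (l+1),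
            (Nat.choose l j : ℝ) * d i ^ (l - j) * M j|
            ≤ ∑ j ∈ Finset.range (l+1),
              |(Nat.choose l j : ℝ) * d i ^ (l - j) * M j| :=
              Finset.abs_sum_le_sum_abs _ _
          _ ≤ ∑ j ∈ Finset.range (l+1), (A * l.factorial * k ^ l) := by
              apply Finset.sum_le_sum
              intro j hj
              have hjl : j ≤ l := Nat.lt_succ_iff.mp (Finset.mem_range.mp hj)
              have hMj : |M j| ≤ k ^ j * j.factorial :=
                ih j (Nat.lt_succ_of_le hjl)
              have hd : |d i| ^ (l - j) ≤ A * (l - j).factorial := by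
                have := hAd i (l - j)
                rw [div_le_iff₀ (by positivity)] at this
                linarith [this]
              have hkj : k ^ j ≤ k ^ l := pow_le_pow_right₀ hk1 hjl
              rw [abs_mul, abs_mul, abs_pow, Nat.abs_cast]
              calc (Nat.choose l j : ℝ) * |d i| ^ (l - j) * |M j|
                  ≤ (Nat.choose l j : ℝ) * (A * (l - j).factorial) * (k ^ j * j.factorial) := by
                    apply mul_le_mul
                    · exact mul_le_mul_of_nonneg_left hd (by positivity)
                    · exact hMj
                    · exact abs_nonneg _
                    · positivity
                _ = A * ((Nat.choose l j : ℝ) * (l - j).factorial * j.factorial) * k ^ j := by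
                    ring
                _ = A * l.factorial * k ^ j := by
                    congr 2
                    push_cast [← Nat.cast_mul]
                    rw [← Nat.choose_mul_factorial_mul_factorial hjl]
                    push_cast
                    ring
                _ ≤ A * l.factorial * k ^ l := by
                    apply mul_le_mul_of_nonneg_left hkj (by positivity)
          _ = (l+1) * (A * l.factorial * k ^ l) := by
              rw [Finset.sum_const, Finset.card_range]
              push_cast; ring
      calc |∑ i, c i * ∑ j ∈ Finset.range (l+1),
            (Nat.choose l j : ℝ) * d i ^ (l - j) * M j|
          ≤ ∑ i, |c i| * ((l+1) * (A * l.factorial * k ^ l)) := by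
            refine le_trans (Finset.abs_sum_le_sum_abs _ _) ?_
            apply Finset.sum_le_sum
            intro i _
            rw [abs_mul]
            exact mul_le_mul_of_nonneg_left (hinner i) (abs_nonneg _)
        _ = (A * ∑ i, |c i|) * k ^ l * ((l+1) * l.factorial) := by
            rw [← Finset.sum_mul]; ring
        _ ≤ k * k ^ l * ((l+1) * l.factorial) := by
            apply mul_le_mul_of_nonneg_right
              (mul_le_mul_of_nonneg_right hkc (by positivity)) (by positivity)
        _ = k ^ (l+1) * (l+1).factorial := by
            rw [pow_succ, Nat.factorial_succ]
            push_cast; ring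
end

section
/- Let X be an operator on a vector space of polynomials and suppose operators a^+, a^0, a^- act on monic orthogonal polynomials (f_n) by a^+ f_n = f_{n+1}, a^0 f_n = α_n f_n, a^- f_n = ω_n f_{n−1} (with f_{−1} = 0), where X = a^+ + a^0 + a^-. If U = a^- + (1/2)a^0 and V = a^+ + (1/2)a^0, then for all n ≥ 1, [U, X] f_n = (ω_{n+1} − ω_n) f_n + (1/2)ω_n(α_n − α_{n−1}) f_{n−1} + (1/2)(α_{n+1} − α_n) f_{n+1}. -/
theorem commutator_U_X_on_orthogonal_polynomials
    {W : Type*} [AddCommGroup W] [Module ℝ W]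
    (f : ℕ → W) (hf : LinearIndependent ℝ f)
    (α ω : ℕ → ℝ)
    (ap a0 am X U V : W →ₗ[ℝ] W)
    (hap : ∀ n, ap (f n) = f (n + 1))
    (ha0 : ∀ n, a0 (f n) = α n • f n)
    (ham0 : am (f 0) = 0)
    (ham : ∀ n, am (f (n + 1)) = ω (n + 1) • f n)
    (hX : X = ap + a0 + am)
    (hU : U = am + (1 / 2 : ℝ) • a0)
    (hV : V = ap + (1 / 2 : ℝ) • a0) :
    ∀ n : ℕ, 1 ≤ n →
      (U ∘ₗ X - X ∘ₗ U) (f n) =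
        (ω (n + 1) - ω n) • f n +
        ((1 / 2) * ω n * (α n - α (n - 1))) • f (n - 1) +
        ((1 / 2) * (α (n + 1) - α n)) • f (n + 1) := by
  intro n hn
  match n, hn with
  | 1, _ =>
    have h2 : f 2 = f (1 + 1) := rfl
    simp only [hX, hU, LinearMap.sub_apply, LinearMap.comp_apply, LinearMap.add_apply,
      LinearMap.smul_apply, map_add, map_smul, h2, hap, ha0, ham0, ham, smul_add, smul_zero,
      add_zero, zero_add, smul_smul, Nat.add_sub_cancel]
    norm_num
    module
  | (k+2), _ =>
    have h3 : f (k + 3) = f ((k + 2) + 1) := rfl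
    have h1 : f (k + 2 - 1) = f (k + 1) := rfl
    have h4 : α (k + 2 - 1) = α (k + 1) := rfl
    simp only [hX, hU, LinearMap.sub_apply, LinearMap.comp_apply, LinearMap.add_apply,
      LinearMap.smul_apply, map_add, map_smul, h3, h1, h4, hap, ha0, ham, smul_add,
      smul_smul, Nat.add_sub_cancel]
    module
end

section
/- With the setup of the quantum decomposition X = a^+ + a^0 + a^- acting on monic orthogonal polynomials f_n with Meixner Szegő–Jacobi parameters α_n = αn + α_0, ω_n = βn² + (t − β)n, and U = a^- + (1/2)a^0, N f_n = n f_n, one has [U, X] = (α/2)X − (Δ/2)N + (τ/2)I as operators on the span of the f_n, where Δ = α² − 4β and τ = 2t − αα_0. -/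
theorem commutator_U_X_meixner
    {W : Type*} [AddCommGroup W] [Module ℝ W]
    (f : ℕ → W) (hf : LinearIndependent ℝ f)
    (α α₀ β t : ℝ)
    (ap a0 am X U N : W →ₗ[ℝ] W)
    (hap : ∀ n, ap (f n) = f (n + 1))
    (ha0 : ∀ n : ℕ, a0 (f n) = (α * n + α₀) • f n)
    (ham0 : am (f 0) = 0)
    (ham : ∀ n : ℕ, am (f (n + 1)) =
      (β * ((n : ℝ) + 1) ^ 2 + (t - β) * ((n : ℝ) + 1)) • f n)
    (hN : ∀ n : ℕ, N (f n) = (n : ℝ) • f n)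
    (hX : X = ap + a0 + am)
    (hU : U = am + (1 / 2 : ℝ) • a0)
    (Δ τ : ℝ) (hΔ : Δ = α ^ 2 - 4 * β) (hτ : τ = 2 * t - α * α₀) :
    ∀ n : ℕ,
      (U ∘ₗ X - X ∘ₗ U) (f n) =
        (α / 2) • X (f n) - (Δ / 2) • N (f n) + (τ / 2) • f n := by
  intro n
  subst hX hU hΔ hτ
  match n with
  | 0 =>
    simp only [LinearMap.sub_apply, LinearMap.comp_apply, LinearMap.add_apply,
      LinearMap.smul_apply, map_add, map_smul, hap, ha0, ham0, ham, hN, ham0, map_zero, smul_zero, zero_add, add_zero, Nat.reduceAdd]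
    push_cast
    match_scalars <;> ring
  | m + 1 =>
    have ham' : am (f m) = (β * (m : ℝ) ^ 2 + (t - β) * (m : ℝ)) • f (m - 1) := by
      match m with
      | 0 => simp [ham0]
      | k + 1 => rw [ham k]; push_cast; ring_nf
    simp only [LinearMap.sub_apply, LinearMap.comp_apply, LinearMap.add_apply,
      LinearMap.smul_apply, map_add, map_smul, hap, ha0, ham0, ham, hN, ham', map_zero, smul_zero, zero_add, add_zero]
    push_cast
    match_scalars <;> ring
end
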